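/- Let R₀ and R₁ be the lag-0 and lag-1 covariance operators of a stationary Hilbertian process, i.e., R₀(h) = E[⟨ξ₀,h⟩ξ₀] and R₁(h) = E[⟨ξ₀,h⟩ξ₁] where (ξ₀,ξ₁) are centered strong-second-order random elements with ξ₁ having the same distribution as ξ₀. Then the closure of the range of R₁ is contained in the closure of the range of R₀. -/

import Mathlib

open MeasureTheory
open scoped RealInnerProductSpace

lemma aux_smul_integrable
    {H : Type*} [NormedAddCommGroup H] [InnerProductSpace ℝ H]
    {Ω : Type*} [MeasurableSpace Ω] {μ : Measure Ω}
    (f g : Ω → H) (hf : MemLp f 2 μ) (hg : MemLp g 2 μ) (c : H) :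
    Integrable (fun ω => ⟪g ω, c⟫ • f ω) μ := by
  rw [← memLp_one_iff_integrable]
  exact hf.smul (hg.inner_const c) (hpqr := ⟨by simp [one_div, ENNReal.inv_two_add_inv_two]⟩)

/-- For a stationary pair (ξ₀, ξ₁) of centered strong-second-order random elements
with common covariance operator R₀ and lag-1 cross-covariance operator R₁, the
closure of the range of R₁ is contained in the closure of the range of R₀. -/
theorem range_R1_subset_range_R0
    {H : Type*} [NormedAddCommGroup H] [InnerProductSpace ℝ H] [CompleteSpace H]
    [SecondCountableTopology H] [MeasurableSpace H] [BorelSpace H]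
    {Ω : Type*} [MeasurableSpace Ω] {μ : Measure Ω} [IsProbabilityMeasure μ]
    (ξ₀ ξ₁ : Ω → H) (hm0 : Measurable ξ₀) (hm1 : Measurable ξ₁)
    (hL0 : MemLp ξ₀ 2 μ) (hL1 : MemLp ξ₁ 2 μ)
    (hc0 : ∀ f : H, ∫ ω, ⟪ξ₀ ω, f⟫ ∂μ = 0) (hc1 : ∀ f : H, ∫ ω, ⟪ξ₁ ω, f⟫ ∂μ = 0)
    (R₀ R₁ : H →L[ℝ] H)
    (hR0 : ∀ h : H, R₀ h = ∫ ω, ⟪ξ₀ ω, h⟫ • ξ₀ ω ∂μ)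
    -- stationarity: ξ₁ has the same (zero-lag) covariance operator as ξ₀
    (hR0' : ∀ h : H, R₀ h = ∫ ω, ⟪ξ₁ ω, h⟫ • ξ₁ ω ∂μ)
    (hR1 : ∀ h : H, R₁ h = ∫ ω, ⟪ξ₀ ω, h⟫ • ξ₁ ω ∂μ) :
    (LinearMap.range (R₁ : H →ₗ[ℝ] H)).topologicalClosure ≤ (LinearMap.range (R₀ : H →ₗ[ℝ] H)).topologicalClosure := by
  rw [← Submodule.orthogonal_orthogonal_eq_closure (K := LinearMap.range (R₀ : H →ₗ[ℝ] H))]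
  refine Submodule.topologicalClosure_minimal _ ?_
    (Submodule.isClosed_orthogonal _)
  rintro _ ⟨h, rfl⟩
  rw [Submodule.mem_orthogonal]
  intro f hf
  -- f is orthogonal to the range of R₀, in particular to R₀ f
  have hR0f : ⟪(R₀ : H →L[ℝ] H) f, f⟫ = 0 := hf _ ⟨f, rfl⟩
  -- hence E ⟪ξ₁, f⟫² = 0
  have hint1 : Integrable (fun ω => ⟪ξ₁ ω, f⟫ • ξ₁ ω) μ :=
    aux_smul_integrable ξ₁ ξ₁ hL1 hL1 f
  have hsq : ∫ ω, ⟪ξ₁ ω, f⟫ ^ 2 ∂μ = 0 := by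
    have := hR0f
    rw [hR0' f, real_inner_comm, ← integral_inner hint1] at this
    rw [← this]
    refine integral_congr_ae (Filter.Eventually.of_forall fun ω => ?_)
    show ⟪ξ₁ ω, f⟫ ^ 2 = ⟪f, ⟪ξ₁ ω, f⟫ • ξ₁ ω⟫
    rw [real_inner_smul_right, real_inner_comm f (ξ₁ ω)]
    ring
  have hsq_int : Integrable (fun ω => ⟪ξ₁ ω, f⟫ ^ 2) μ := by
    simpa [sq] using ((hL1.inner_const f).integrable_sq)
  have hae : ∀ᵐ ω ∂μ, ⟪ξ₁ ω, f⟫ = 0 := by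
    have h0 : ∀ᵐ ω ∂μ, ⟪ξ₁ ω, f⟫ ^ 2 = 0 := by
      have := (integral_eq_zero_iff_of_nonneg
        (fun ω => sq_nonneg _) hsq_int).mp hsq
      filter_upwards [this] with ω hω using hω
    filter_upwards [h0] with ω hω using pow_eq_zero_iff two_ne_zero |>.mp hω
  -- now ⟪R₁ h, f⟫ = 0
  have hint2 : Integrable (fun ω => ⟪ξ₀ ω, h⟫ • ξ₁ ω) μ :=
    aux_smul_integrable ξ₁ ξ₀ hL1 hL0 h
  have key : ∫ ω, ⟪f, ⟪ξ₀ ω, h⟫ • ξ₁ ω⟫ ∂μ = ⟪f, (∫ ω, ⟪ξ₀ ω, h⟫ • ξ₁ ω ∂μ)⟫ :=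
    integral_inner hint2 f
  rw [ContinuousLinearMap.coe_coe, hR1 h, ← key]
  have : ∀ᵐ ω ∂μ, ⟪f, ⟪ξ₀ ω, h⟫ • ξ₁ ω⟫ = 0 := by
    filter_upwards [hae] with ω hω
    rw [real_inner_smul_right, show ⟪f, ξ₁ ω⟫ = 0 from by rw [real_inner_comm]; exact hω, mul_zero]
  rw [integral_congr_ae this, integral_zero]
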